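/- Let J be a connected order ideal of P and suppose χ_J is a subgraph of the connected component D_r of H_P (so that J ⊆ ⋃_{Λ_i^P ∈ V(D_r)} Λ_i^P). If J ≠ ⋃_{Λ_i^P ∈ V(D_r)} Λ_i^P, then there exists some Λ_j^P ∈ V(D_r) such that J and Λ_j^P are adjacent in G_P. -/

import Mathlib

attribute [local instance] Classical.propDecidable

noncomputable section

open Finset

variable {n : ℕ}

/-- The comparability graph of the poset structure `P` on `Fin n`; for an order
ideal of `P`, connectivity of its induced subgraph in this graph agrees with
connectivity of the Hasse diagram. -/
def compGraph (P : PartialOrder (Fin n)) : SimpleGraph (Fin n) where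
  Adj i j := i ≠ j ∧ (P.le i j ∨ P.le j i)
  symm := by
    constructor
    intro i j h
    exact ⟨h.1.symm, h.2.symm⟩
  loopless := by
    constructor
    intro i h
    exact h.1 rfl

/-- `J` is an order ideal of the poset `P`. -/
def IsIdeal (P : PartialOrder (Fin n)) (J : Finset (Fin n)) : Prop :=
  ∀ i ∈ J, ∀ j : Fin n, P.le j i → j ∈ J

/-- The Hasse diagram of `J` as a subposet of `P` is a connected graph. -/
def JConn (P : PartialOrder (Fin n)) (J : Finset (Fin n)) : Prop :=
  ((compGraph P).induce (↑J : Set (Fin n))).Connected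

/-- `J` is a connected order ideal of `P`. -/
def IsConnIdeal (P : PartialOrder (Fin n)) (J : Finset (Fin n)) : Prop :=
  IsIdeal P J ∧ JConn P J

/-- The type of connected order ideals of `P` (the vertices of `G_P`). -/
abbrev ConnIdeal (P : PartialOrder (Fin n)) : Type :=
  {J : Finset (Fin n) // IsConnIdeal P J}

instance (P : PartialOrder (Fin n)) : Fintype (ConnIdeal P) := Fintype.ofFinite _

/-- `A` and `B` intersect nontrivially. -/
def Nontriv (A B : Finset (Fin n)) : Prop :=
  (A ∩ B).Nonempty ∧ ¬ A ⊆ B ∧ ¬ B ⊆ A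

/-- The graph `G_P` on the connected order ideals of `P`, with two ideals
adjacent iff they intersect nontrivially. -/
def GP (P : PartialOrder (Fin n)) : SimpleGraph (ConnIdeal P) where
  Adj A B := Nontriv A.1 B.1
  symm := by
    constructor
    intro A B h
    exact ⟨by rw [Finset.inter_comm]; exact h.1, h.2.2, h.2.1⟩
  loopless := by
    constructor
    intro A h
    exact h.2.1 (Finset.Subset.refl _)

instance (P : PartialOrder (Fin n)) : Fintype ((GP P).ConnectedComponent) :=
  Fintype.ofFinite _

instance (P : PartialOrder (Fin n)) : Fintype ((GP P).edgeSet) :=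
  Fintype.ofFinite _

/-- `s` is an independent set of the graph `G`. -/
def IsIndep {V : Type*} (G : SimpleGraph V) (s : Finset V) : Prop :=
  ∀ a ∈ s, ∀ b ∈ s, ¬ G.Adj a b

/-- `s` is a maximum independent set of the graph `G`. -/
def IsMaxIndep {V : Type*} (G : SimpleGraph V) (s : Finset V) : Prop :=
  IsIndep G s ∧ ∀ t : Finset V, IsIndep G t → t.card ≤ s.card

/-- `s` is a maximum independent set of the subgraph of `G` induced on the
vertex set `S` (e.g. on a connected component of `G`). -/
def IsMaxIndepOn {V : Type*} (G : SimpleGraph V) (S : Set V) (s : Finset V) : Prop :=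
  ↑s ⊆ S ∧ IsIndep G s ∧ ∀ t : Finset V, ↑t ⊆ S → IsIndep G t → t.card ≤ s.card

/-- `μ(M, J) = ⋃_{J' ∈ M, J' ⊊ J} J'`. -/
def mu (P : PartialOrder (Fin n)) (M : Finset (ConnIdeal P)) (J : Finset (Fin n)) :
    Finset (Fin n) :=
  (M.filter (fun J' => J'.1 ⊂ J)).biUnion (fun J' => J'.1)

/-- The strict order relation of the poset `F_M` associated with a maximum
independent set `M` of `G_P`: `i <_{F_M} j` iff `J_a ⊊ J_b` where `J_a, J_b ∈ M`
satisfy `J_a \ μ(M,J_a) = {i}` and `J_b \ μ(M,J_b) = {j}`. -/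
def FMlt (P : PartialOrder (Fin n)) (M : Finset (ConnIdeal P)) (i j : Fin n) : Prop :=
  ∃ Ja ∈ M, ∃ Jb ∈ M,
    Ja.1 \ mu P M Ja.1 = {i} ∧ Jb.1 \ mu P M Jb.1 = {j} ∧ Ja.1 ⊂ Jb.1

/-- The order relation of the poset `F_M`. -/
def FMle (P : PartialOrder (Fin n)) (M : Finset (ConnIdeal P)) (i j : Fin n) : Prop :=
  i = j ∨ FMlt P M i j

/-- Strict relation associated with the relation `le`. -/
def ltRel (le : Fin n → Fin n → Prop) (i j : Fin n) : Prop := le i j ∧ i ≠ j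

/-- `j` covers `i` in the order given by the relation `le`. -/
def CovRel (le : Fin n → Fin n → Prop) (i j : Fin n) : Prop :=
  ltRel le i j ∧ ∀ k : Fin n, ltRel le i k → ¬ ltRel le k j

/-- The principal order ideal `Λ_i = {j : j ≤ i}` of the order given by `le`. -/
def LamRel (le : Fin n → Fin n → Prop) (i : Fin n) : Finset (Fin n) :=
  Finset.univ.filter (fun j => le j i)

/-- The descent set of a forest order given by the relation `le`:
elements `i` whose parent (the element covering `i`) is smaller than `i`. -/
def DesRel (le : Fin n → Fin n → Prop) : Finset (Fin n) :=
  Finset.univ.filter (fun i => ∃ j : Fin n, CovRel le i j ∧ j < i)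

/-- `Des(M) = Des(F_M)`. -/
def DesM (P : PartialOrder (Fin n)) (M : Finset (ConnIdeal P)) : Finset (Fin n) :=
  DesRel (FMle P M)

/-- `Des(M_r, M)`. -/
def DesMr (P : PartialOrder (Fin n)) (Mr M : Finset (ConnIdeal P)) : Finset (Fin n) :=
  (DesM P M).filter (fun i => ∃ J ∈ Mr, J.1 \ mu P M J.1 = {i})

/-- `Des̄(M_r, M)`. -/
def DesBarMr (P : PartialOrder (Fin n)) (Mr M : Finset (ConnIdeal P)) :
    Finset (ConnIdeal P) :=
  Mr.filter (fun J => ∃ i ∈ DesMr P Mr M, J.1 \ mu P M J.1 = {i})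

/-- The relation `le` is (the order relation of) a `P`-forest: a partial order
whose Hasse diagram is a forest, all of whose principal order ideals are
connected order ideals of `P`, and such that for incomparable `i, j` the union
`Λ_i ∪ Λ_j` is a disconnected order ideal of `P`. -/
structure IsPForestRel (P : PartialOrder (Fin n)) (le : Fin n → Fin n → Prop) : Prop where
  refl : ∀ i, le i i
  trans : ∀ i j k, le i j → le j k → le i k
  antisymm : ∀ i j, le i j → le j i → i = j
  forest : ∀ i j k, CovRel le i j → CovRel le i k → j = k
  connIdeal : ∀ i, IsConnIdeal P (LamRel le i)
  disc : ∀ i j : Fin n, ¬ le i j → ¬ le j i →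
    IsIdeal P (LamRel le i ∪ LamRel le j) ∧ ¬ JConn P (LamRel le i ∪ LamRel le j)

/-- The principal order ideal `Λ_i^P` of `P`. -/
def PIdeal (P : PartialOrder (Fin n)) (i : Fin n) : Finset (Fin n) :=
  Finset.univ.filter (fun k => P.le k i)

/-- The generating set `gs(J)`: the maximal elements of `J` with respect to `P`. -/
def gsJ (P : PartialOrder (Fin n)) (J : Finset (Fin n)) : Finset (Fin n) :=
  J.filter (fun i => ∀ j ∈ J, ¬ P.lt i j)

/-- `P` is naturally labeled. -/
def NatLabeled (P : PartialOrder (Fin n)) : Prop :=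
  ∀ i j : Fin n, P.lt i j → i < j

/-- `U_max(M, J)`: the maximal members of `U(M,J) = {J' ∈ M : J' ⊊ J}`. -/
def Umax (P : PartialOrder (Fin n)) (M : Finset (ConnIdeal P)) (J : Finset (Fin n)) :
    Finset (ConnIdeal P) :=
  (M.filter (fun Ja => Ja.1 ⊂ J)).filter
    (fun Ja => ∀ Jb ∈ M, Jb.1 ⊂ J → Jb ≠ Ja → ¬ Ja.1 ⊂ Jb.1)

/-- The set of vertices of `G_P` which are principal order ideals of `P`. -/
def PIdealSet (P : PartialOrder (Fin n)) : Set (ConnIdeal P) :=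
  {A : ConnIdeal P | ∃ i : Fin n, A.1 = PIdeal P i}

/-- The graph `H_P`: the subgraph of `G_P` induced by the principal order ideals. -/
def HP (P : PartialOrder (Fin n)) : SimpleGraph (PIdealSet P) :=
  (GP P).induce (PIdealSet P)

/-- `f` is a `P`-partition. -/
def IsPPartition (P : PartialOrder (Fin n)) (f : Fin n → ℕ) : Prop :=
  (∀ i j : Fin n, P.lt i j → f j ≤ f i) ∧
  (∀ i j : Fin n, P.lt i j → j < i → f j < f i)

/-- The monomial `∏_{k ∈ J} x_k`. -/
def xJ (J : Finset (Fin n)) : MvPowerSeries (Fin n) ℚ :=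
  ∏ k ∈ J, MvPowerSeries.X k

/-- The set of linear extensions of `P`, viewed as permutations `w` of `Fin n`
(in positions `0, …, n-1`) such that `i < j` whenever `w i <_P w j`. -/
def LinExts (P : PartialOrder (Fin n)) : Finset (Equiv.Perm (Fin n)) :=
  Finset.univ.filter (fun w => ∀ i j : Fin n, P.lt (w i) (w j) → i < j)

/-- The major index of a permutation (with 1-indexed positions). -/
def maj (w : Equiv.Perm (Fin n)) : ℕ :=
  ∑ i ∈ Finset.univ.filter
      (fun i : Fin n => ∃ h : (i : ℕ) + 1 < n, w ⟨(i : ℕ) + 1, h⟩ < w i),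
    ((i : ℕ) + 1)

/-- The finset of maximum independent sets of the connected component `c` of `G_P`. -/
def MaxIndepsOn (P : PartialOrder (Fin n)) (c : (GP P).ConnectedComponent) :
    Finset (Finset (ConnIdeal P)) :=
  Finset.univ.filter (fun Mr : Finset (ConnIdeal P) => IsMaxIndepOn (GP P) c.supp Mr)

lemma pIdeal_connIdeal (P : PartialOrder (Fin n)) (m : Fin n) :
    IsConnIdeal P (PIdeal P m) := by
  constructor
  · intro i hi j hj
    simp only [PIdeal, mem_filter, mem_univ, true_and] at hi ⊢
    exact P.le_trans _ _ _ hj hi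
  · have hm : m ∈ PIdeal P m := by
      simp [PIdeal, P.le_refl]
    rw [JConn, SimpleGraph.connected_iff]
    constructor
    · intro a b
      have reach : ∀ c : (↑(PIdeal P m) : Set (Fin n)),
          ((compGraph P).induce (↑(PIdeal P m) : Set (Fin n))).Reachable c
            ⟨m, by exact_mod_cast hm⟩ := by
        intro c
        rcases eq_or_ne c.1 m with h | h
        · have : c = ⟨m, by exact_mod_cast hm⟩ := Subtype.ext h
          rw [this]
        · apply SimpleGraph.Adj.reachable
          refine ⟨h, Or.inl ?_⟩
          have := c.2
          simp only [coe_filter, PIdeal, Set.mem_setOf_eq, mem_univ, true_and,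
            Finset.coe_filter] at this
          exact this
      exact (reach a).trans (reach b).symm
    · exact ⟨⟨m, by exact_mod_cast hm⟩⟩

lemma exists_max_above (P : PartialOrder (Fin n)) (s : Finset (Fin n)) :
    ∀ x ∈ s, ∃ m ∈ s, P.le x m ∧ ∀ y ∈ s, ¬ P.lt m y := by
  have key : ∀ k : ℕ, ∀ x ∈ s, (s.filter (fun y => P.lt x y)).card ≤ k →
      ∃ m ∈ s, P.le x m ∧ ∀ y ∈ s, ¬ P.lt m y := by
    intro k
    induction k with
    | zero =>
      intro x hx hc
      refine ⟨x, hx, P.le_refl x, fun y hy hlt => ?_⟩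
      have : y ∈ s.filter (fun y => P.lt x y) := mem_filter.2 ⟨hy, hlt⟩
      simp only [Nat.le_zero, card_eq_zero] at hc
      rw [hc] at this
      exact absurd this (notMem_empty y)
    | succ k ih =>
      intro x hx hc
      by_cases hmax : ∀ y ∈ s, ¬ P.lt x y
      · exact ⟨x, hx, P.le_refl x, hmax⟩
      · push_neg at hmax
        obtain ⟨y, hy, hlt⟩ := hmax
        have hsub : (s.filter (fun z => P.lt y z)) ⊂ (s.filter (fun z => P.lt x z)) := by
          constructor
          · intro z hz
            rw [mem_filter] at hz ⊢
            exact ⟨hz.1, @lt_trans (Fin n) P.toPreorder _ _ _ hlt hz.2⟩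
          · intro hss
            have hyin : y ∈ s.filter (fun z => P.lt x z) := mem_filter.2 ⟨hy, hlt⟩
            have := hss hyin
            rw [mem_filter] at this
            exact @lt_irrefl (Fin n) P.toPreorder y this.2
        have hcard : (s.filter (fun z => P.lt y z)).card ≤ k := by
          have := Finset.card_lt_card hsub
          omega
        obtain ⟨m, hm, hym, hmaxm⟩ := ih y hy hcard
        exact ⟨m, hm, P.le_trans _ _ _ (@le_of_lt (Fin n) P.toPreorder _ _ hlt) hym,
          hmaxm⟩
  intro x hx
  exact key _ x hx le_rfl

/-- Lemma 3.3(2): let `J` be a connected order ideal of `P`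
such that `χ_J` is a subgraph of the connected component `D` of `H_P`.  If
`J ≠ ⋃_{Λ_i^P ∈ V(D)} Λ_i^P`, then `J` is adjacent in `G_P` to some vertex
`Λ_j^P ∈ V(D)`. -/
theorem statement_12 (n : ℕ) (P : PartialOrder (Fin n))
    (J : ConnIdeal P) (D : (HP P).ConnectedComponent)
    (hchi : ∀ v : ↥(PIdealSet P), (∃ i ∈ gsJ P J.1, v.1.1 = PIdeal P i) →
      (HP P).connectedComponentMk v = D)
    (hne : (↑J.1 : Set (Fin n)) ≠
      ⋃ v ∈ {v : ↥(PIdealSet P) | (HP P).connectedComponentMk v = D},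
        (↑(v.1.1) : Set (Fin n))) :
    ∃ v : ↥(PIdealSet P),
      (HP P).connectedComponentMk v = D ∧ (GP P).Adj J v.1 := by
  classical
  -- J is nonempty
  obtain ⟨⟨x0, hx0⟩⟩ := J.2.2.nonempty
  have hx0 : x0 ∈ J.1 := by exact_mod_cast hx0
  -- construct the vertex of PIdealSet associated to a maximal element
  have mkv : ∀ m ∈ gsJ P J.1, ∃ v : ↥(PIdealSet P),
      v.1.1 = PIdeal P m ∧ (HP P).connectedComponentMk v = D := by
    intro m hm
    refine ⟨⟨⟨PIdeal P m, pIdeal_connIdeal P m⟩, ⟨m, rfl⟩⟩, rfl, ?_⟩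
    exact hchi _ ⟨m, hm, rfl⟩
  -- every element of J lies in some Λ_m with m ∈ gsJ
  have hJsub : (↑J.1 : Set (Fin n)) ⊆
      ⋃ v ∈ {v : ↥(PIdealSet P) | (HP P).connectedComponentMk v = D},
        (↑(v.1.1) : Set (Fin n)) := by
    intro x hx
    have hx : x ∈ J.1 := by exact_mod_cast hx
    obtain ⟨m, hm, hxm, hmax⟩ := exists_max_above P J.1 x hx
    have hmgs : m ∈ gsJ P J.1 := mem_filter.2 ⟨hm, hmax⟩
    obtain ⟨v, hv1, hv2⟩ := mkv m hmgs
    refine Set.mem_biUnion hv2 ?_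
    rw [hv1]
    simp only [Finset.coe_filter, PIdeal, Set.mem_setOf_eq, Finset.mem_coe,
      mem_filter, mem_univ, true_and]
    exact hxm
  -- some ideal in D is not contained in J
  have hex : ∃ w : ↥(PIdealSet P),
      (HP P).connectedComponentMk w = D ∧ ¬ w.1.1 ⊆ J.1 := by
    by_contra h
    push_neg at h
    apply hne
    apply Set.Subset.antisymm hJsub
    intro x hx
    simp only [Set.mem_iUnion, Set.mem_setOf_eq, exists_prop] at hx
    obtain ⟨v, hv, hxv⟩ := hx
    exact_mod_cast h v hv (by exact_mod_cast hxv)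
  obtain ⟨w, hwD, hwJ⟩ := hex
  -- starting vertex: Λ_m ⊆ J for a maximal m of J
  obtain ⟨m, hm, _, hmax⟩ := exists_max_above P J.1 x0 hx0
  have hmgs : m ∈ gsJ P J.1 := mem_filter.2 ⟨hm, hmax⟩
  obtain ⟨v0, hv01, hv02⟩ := mkv m hmgs
  have hv0sub : v0.1.1 ⊆ J.1 := by
    rw [hv01]
    intro k hk
    simp only [PIdeal, mem_filter, mem_univ, true_and] at hk
    exact J.2.1 m hm k hk
  -- walk from v0 to w in HP
  have hreach : (HP P).Reachable v0 w :=
    SimpleGraph.ConnectedComponent.exact (hv02.trans hwD.symm)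
  obtain ⟨p⟩ := hreach
  clear hv01 hv02 hmgs hmax hm hx0
  -- induct along the walk
  induction p with
  | nil => exact absurd hv0sub hwJ
  | @cons a b c hadj p ih =>
    by_cases hb : b.1.1 ⊆ J.1
    · exact ih hwD hwJ hb
    · refine ⟨b, ?_, ?_⟩
      · rw [SimpleGraph.ConnectedComponent.sound p.reachable]
        exact hwD
      · have hadj' : Nontriv a.1.1 b.1.1 := hadj
        obtain ⟨⟨x, hx⟩, hab, hba⟩ := hadj'
        rw [mem_inter] at hx
        refine ⟨⟨x, mem_inter.2 ⟨hv0sub hx.1, hx.2⟩⟩, ?_, hb⟩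
        intro hJb
        exact hab (fun z hz => hJb (hv0sub hz))
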